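/- Consider the planar charged oscillator in a constant magnetic field of strength B, governed by the linear system ẍ − Bẏ + αx = 0, ÿ + Bẋ + βy = 0, written as a first-order system ż = A₀z on ℝ⁴ with z = (x, y, ẋ, ẏ). If α < 0, β < 0 and B² + α + β < 2√(αβ), then the 4×4 real matrix A₀ has an eigenvalue λ ∈ ℂ with strictly positive real part (the gyroscopic forces fail to stabilize). -/

import Mathlib

/-- The 4×4 matrix of the planar charged oscillator ẍ − Bẏ + αx = 0,
ÿ + Bẋ + βy = 0 written as a first-order system ż = A₀z with z = (x, y, ẋ, ẏ). -/
noncomputable def gyroA (α β B : ℝ) : Matrix (Fin 4) (Fin 4) ℝ :=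
  !![0, 0, 1, 0;
     0, 0, 0, 1;
     -α, 0, 0, B;
     0, -β, -B, 0]

/-- If `0 < p` and `s < 2√p`, the quartic `λ⁴ + sλ² + p` has a root with
positive real part. -/
lemma gyro_quartic_root (s p : ℝ) (hppos : 0 < p) (hB : s < 2 * Real.sqrt p) :
    ∃ lam : ℂ, lam ^ 4 + (s : ℂ) * lam ^ 2 + (p : ℂ) = 0 ∧ 0 < lam.re := by
  obtain ⟨w, hw⟩ : ∃ w : ℂ, w ^ 2 = (s : ℂ) ^ 2 - 4 * (p : ℂ) :=
    IsAlgClosed.exists_pow_nat_eq _ (by norm_num : (0:ℕ) < 2)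
  have hμ : ((-(s : ℂ) + w) / 2) ^ 2 + (s : ℂ) * ((-(s : ℂ) + w) / 2) + (p : ℂ) = 0 := by
    linear_combination hw / 4
  set μ : ℂ := (-(s : ℂ) + w) / 2 with hμdef
  -- μ is not a nonpositive real number
  have hnotreal : ∀ t : ℝ, (t : ℂ) = μ → 0 < t := by
    intro t ht
    by_contra hle
    push_neg at hle
    have htreal : t ^ 2 + s * t + p = 0 := by
      have h2 := hμ
      rw [← ht] at h2
      exact_mod_cast h2
    have htneg : t < 0 := by
      rcases lt_or_eq_of_le hle with h | h
      · exact h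
      · exfalso; rw [h] at htreal; nlinarith
    have hsq : Real.sqrt p ^ 2 = p := Real.sq_sqrt hppos.le
    nlinarith [sq_nonneg (t + Real.sqrt p), Real.sqrt_nonneg p,
      mul_pos (by linarith : (0:ℝ) < 2 * Real.sqrt p - s) (by linarith : 0 < -t)]
  obtain ⟨l, hl⟩ : ∃ l : ℂ, l ^ 2 = μ :=
    IsAlgClosed.exists_pow_nat_eq _ (by norm_num : (0:ℕ) < 2)
  have hlre : l.re ≠ 0 := by
    intro h0
    have him : μ.im = 0 := by
      rw [← hl]; simp [pow_two, Complex.mul_im, h0]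
    have hre : μ.re = -(l.im ^ 2) := by
      rw [← hl]; simp [pow_two, Complex.mul_re, h0]
    have hμre : (μ.re : ℂ) = μ := Complex.ext (by simp) (by simp [him])
    have := hnotreal μ.re hμre
    nlinarith [sq_nonneg l.im]
  rcases lt_or_gt_of_ne hlre with hneg | hpos
  · refine ⟨-l, ?_, by simpa using hneg⟩
    have h2 : (-l) ^ 2 = μ := by rw [← hl]; ring
    calc (-l) ^ 4 + (s : ℂ) * (-l) ^ 2 + (p : ℂ)
        = ((-l) ^ 2) ^ 2 + (s : ℂ) * (-l) ^ 2 + (p : ℂ) := by ring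
      _ = μ ^ 2 + (s : ℂ) * μ + (p : ℂ) := by rw [h2]
      _ = 0 := hμ
  · refine ⟨l, ?_, hpos⟩
    calc l ^ 4 + (s : ℂ) * l ^ 2 + (p : ℂ)
        = (l ^ 2) ^ 2 + (s : ℂ) * l ^ 2 + (p : ℂ) := by ring
      _ = μ ^ 2 + (s : ℂ) * μ + (p : ℂ) := by rw [hl]
      _ = 0 := hμ

/-- Failure of gyroscopic stabilization: if α < 0, β < 0 and B² + α + β < 2√(αβ),
then A₀ has an eigenvalue with strictly positive real part. -/
theorem stmt1 (α β B : ℝ) (hα : α < 0) (hβ : β < 0)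
    (hB : B ^ 2 + α + β < 2 * Real.sqrt (α * β)) :
    ∃ lam : ℂ,
      (lam • (1 : Matrix (Fin 4) (Fin 4) ℂ) - (gyroA α β B).map Complex.ofReal).det = 0 ∧
      0 < lam.re := by
  obtain ⟨lam, hroot, hre⟩ := gyro_quartic_root (B ^ 2 + α + β) (α * β)
    (mul_pos_of_neg_of_neg hα hβ) hB
  refine ⟨lam, ?_, hre⟩
  have h : (lam • (1 : Matrix (Fin 4) (Fin 4) ℂ) - (gyroA α β B).map Complex.ofReal)
      = !![lam, 0, -1, 0; 0, lam, 0, -1; (α:ℂ), 0, lam, -(B:ℂ); 0, (β:ℂ), (B:ℂ), lam] := by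
    ext i j
    fin_cases i <;> fin_cases j <;> simp [gyroA, Matrix.one_apply]
  rw [h]
  have hdet : (!![lam, 0, -1, 0; 0, lam, 0, -1; (α:ℂ), 0, lam, -(B:ℂ);
        0, (β:ℂ), (B:ℂ), lam] : Matrix (Fin 4) (Fin 4) ℂ).det
      = lam ^ 4 + ((B ^ 2 + α + β : ℝ) : ℂ) * lam ^ 2 + ((α * β : ℝ) : ℂ) := by
    simp [Matrix.det_succ_row_zero, Fin.sum_univ_succ, Fin.succAbove]
    push_cast [mul_comm]
    ring
  rw [hdet, hroot]
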